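/- Let (M,g) be a complete m-dimensional manifold with a pole whose radial curvature satisfies −a²/(1+r²) ≤ K_r ≤ b²/(1+r²) with a ≥ 0, b² ∈ [0,1/4], and 2 + (m−1)(1+√(1−4b²)) − p(1+√(1+4a²)) > 0. Then the eigenvalues of Hess(r²) satisfy Σᵢλᵢ − p·λ_m ≥ 2[1 − p/2 + (m−1)(1+√(1−4b²))/2 − (p/2)√(1+4a²)]. -/
import Mathlib


open RealInnerProductSpace

/-- eigenvalue estimate under radial curvature bounds
`−a²/(1+r²) ≤ K_r ≤ b²/(1+r²)`.  The curvature condition enters (as in the Hessian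
comparison of the context) through the bounds
`((1+√(1−4b²))/(2r))[g−dr⊗dr] ≤ Hess(r) ≤ ((1+√(1+4a²))/(2r))[g−dr⊗dr]` on the
self-adjoint operator `A` representing `Hess(r)`.  The manifold has dimension `m + 1`
and `lam 0 ≤ … ≤ lam m` are the eigenvalues of `Hess(r²) = 2 dr⊗dr + 2r Hess(r)`.
Then `Σᵢ λᵢ − p·λ_max ≥ 2[1 − p/2 + ((m+1)−1)(1+√(1−4b²))/2 − (p/2)√(1+4a²)]`. -/
theorem hessian_eigenvalue_estimate_quadratic_decay {E : Type*} [NormedAddCommGroup E]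
    [InnerProductSpace ℝ E] {m : ℕ}
    (p r a bb : ℝ) (hp : 1 ≤ p) (hr : 0 < r)
    (ha : 0 ≤ a) (hbb : bb ^ 2 ≤ 1 / 4)
    (hdim : 0 < 2 + (m : ℝ) * (1 + Real.sqrt (1 - 4 * bb ^ 2))
      - p * (1 + Real.sqrt (1 + 4 * a ^ 2)))
    (ρv : E) (hρv : ‖ρv‖ = 1)
    (A : E →ₗ[ℝ] E) (hAsym : ∀ v w, ⟪A v, w⟫ = ⟪v, A w⟫) (hAρ : A ρv = 0)
    (hA_lb : ∀ v, ⟪v, ρv⟫ = 0 →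
      (1 + Real.sqrt (1 - 4 * bb ^ 2)) / (2 * r) * ‖v‖ ^ 2 ≤ ⟪A v, v⟫)
    (hA_ub : ∀ v, ⟪v, ρv⟫ = 0 →
      ⟪A v, v⟫ ≤ (1 + Real.sqrt (1 + 4 * a ^ 2)) / (2 * r) * ‖v‖ ^ 2)
    (lam : Fin (m + 1) → ℝ) (hmono : Monotone lam)
    (b : OrthonormalBasis (Fin (m + 1)) ℝ E)
    (hb : ∀ i, (2 * ⟪b i, ρv⟫) • ρv + (2 * r) • A (b i) = lam i • b i) :
    2 * (1 - p / 2 + (m : ℝ) * (1 + Real.sqrt (1 - 4 * bb ^ 2)) / 2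
        - p / 2 * Real.sqrt (1 + 4 * a ^ 2))
      ≤ (∑ i, lam i) - p * lam (Fin.last m) := by
  set α := 1 + Real.sqrt (1 - 4 * bb ^ 2) with hαdef
  set β := 1 + Real.sqrt (1 + 4 * a ^ 2) with hβdef
  have hα2 : α ≤ 2 := by
    nlinarith [Real.sq_sqrt (by nlinarith [sq_nonneg bb] : (0:ℝ) ≤ 1 - 4 * bb ^ 2),
      Real.sqrt_nonneg (1 - 4 * bb ^ 2)]
  have hα0 : 0 ≤ α := by positivity
  have hβ2 : 2 ≤ β := by
    nlinarith [Real.sq_sqrt (by positivity : (0:ℝ) ≤ 1 + 4 * a ^ 2),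
      Real.sqrt_nonneg (1 + 4 * a ^ 2), sq_nonneg a,
      sq_nonneg (Real.sqrt (1 + 4 * a ^ 2) - 1)]
  set c : Fin (m + 1) → ℝ := fun i => ⟪b i, ρv⟫ with hcdef
  set w : Fin (m + 1) → E := fun i => b i - c i • ρv with hwdef
  have hρρ : ⟪ρv, ρv⟫ = (1:ℝ) := by
    rw [real_inner_self_eq_norm_sq, hρv]; norm_num
  have hperp : ∀ i, ⟪w i, ρv⟫ = 0 := by
    intro i
    simp only [hwdef, inner_sub_left, real_inner_smul_left, hρρ, mul_one, hcdef, sub_self]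
  have hbnorm : ∀ i, ⟪b i, b i⟫ = (1:ℝ) := by
    intro i
    rw [real_inner_self_eq_norm_sq, b.orthonormal.1 i]; norm_num
  have hwnorm : ∀ i, ‖w i‖ ^ 2 = 1 - c i ^ 2 := by
    intro i
    rw [← real_inner_self_eq_norm_sq]
    simp only [hwdef, inner_sub_left, inner_sub_right, real_inner_smul_left,
      real_inner_smul_right, hρρ, hbnorm, hcdef]
    rw [real_inner_comm ρv (b i)]
    ring
  have hcsq : ∀ i, c i ^ 2 ≤ 1 := by
    intro i
    have := hwnorm i
    nlinarith [sq_nonneg ‖w i‖]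
  have hAw : ∀ i, A (b i) = A (w i) := by
    intro i
    simp only [hwdef, map_sub, map_smul, hAρ, smul_zero, sub_zero]
  have hAinner : ∀ i, ⟪A (b i), b i⟫ = ⟪A (w i), w i⟫ := by
    intro i
    rw [hAw i]
    have hAwρ : ⟪A (w i), ρv⟫ = 0 := by rw [hAsym, hAρ, inner_zero_right]
    have : b i = w i + c i • ρv := by simp [hwdef]
    rw [this, inner_add_right, real_inner_smul_right, hAwρ, mul_zero, add_zero]
  have hlam : ∀ i, lam i = 2 * c i ^ 2 + 2 * r * ⟪A (w i), w i⟫ := by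
    intro i
    have h := congrArg (fun x : E => (⟪x, b i⟫ : ℝ)) (hb i)
    simp only [inner_add_left, real_inner_smul_left, hbnorm, mul_one] at h
    rw [hAinner i] at h
    show lam i = 2 * (⟪b i, ρv⟫ : ℝ) ^ 2 + 2 * r * ⟪A (w i), w i⟫
    have hcomm : (⟪ρv, b i⟫ : ℝ) = ⟪b i, ρv⟫ := real_inner_comm _ _
    linear_combination -h + 2 * (⟪b i, ρv⟫ : ℝ) * hcomm
  have hlow : ∀ i, 2 * c i ^ 2 + α * (1 - c i ^ 2) ≤ lam i := by
    intro i
    have h3 := hA_lb (w i) (hperp i)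
    rw [div_mul_eq_mul_div, div_le_iff₀ (by positivity : (0:ℝ) < 2 * r)] at h3
    rw [hwnorm i] at h3
    rw [hlam i]
    nlinarith [h3]
  have hupp : ∀ i, lam i ≤ β := by
    intro i
    have h3 := hA_ub (w i) (hperp i)
    rw [div_mul_eq_mul_div, le_div_iff₀ (by positivity : (0:ℝ) < 2 * r)] at h3
    rw [hwnorm i] at h3
    rw [hlam i]
    nlinarith [hcsq i]
  have hpar : ∑ i, c i ^ 2 = 1 := by
    have h := b.sum_inner_mul_inner ρv ρv
    rw [hρρ] at h
    rw [← h]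
    refine Finset.sum_congr rfl fun i _ => ?_
    show (⟪b i, ρv⟫ : ℝ) ^ 2 = ⟪ρv, b i⟫ * ⟪b i, ρv⟫
    rw [real_inner_comm ρv (b i)]
    ring
  have hsum : 2 + (m : ℝ) * α ≤ ∑ i, lam i := by
    have h1 : ∑ i, (2 * c i ^ 2 + α * (1 - c i ^ 2)) ≤ ∑ i, lam i :=
      Finset.sum_le_sum fun i _ => hlow i
    have h2 : ∑ i, (2 * c i ^ 2 + α * (1 - c i ^ 2))
        = (m + 1 : ℝ) * α + (2 - α) * ∑ i, c i ^ 2 := by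
      have e : ∀ i : Fin (m + 1), 2 * c i ^ 2 + α * (1 - c i ^ 2)
          = α + (2 - α) * c i ^ 2 := fun i => by ring
      rw [Finset.sum_congr rfl fun i _ => e i, Finset.sum_add_distrib,
        Finset.sum_const, ← Finset.mul_sum]
      simp only [Finset.card_univ, Fintype.card_fin, nsmul_eq_mul]
      push_cast
      ring
    rw [h2, hpar] at h1
    linarith
  have hlast : p * lam (Fin.last m) ≤ p * β :=
    mul_le_mul_of_nonneg_left (hupp _) (by linarith)
  have : 2 * (1 - p / 2 + (m : ℝ) * α / 2 - p / 2 * Real.sqrt (1 + 4 * a ^ 2))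
      = 2 + (m : ℝ) * α - p * β := by rw [hβdef]; ring
  rw [this]
  linarith [hsum, hlast]
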